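/- arXiv:1612.07776 — 2 statements merged into one kernel-verified Lean document; each statement's English description precedes it below -/
import Mathlib

section
/- Spectral properties of T: for every τ ≥ 0 and η > 0, the symmetric matrix T satisfies ‖T‖₂ = 1 and ‖T‖_{ℓ^∞→ℓ^∞} = 1; its spectrum is spec(T) = {−1} ∪ { τ u_i − (v₁v₂)_i/u_i : i = 1,…,n }; if τ = 0 then T = −Id, and if τ > 0 then the eigenspace of T for the eigenvalue −1 equals { (y, −y) : y ∈ ℂ^n }. Moreover, assuming ρ(S) = 1 and given τ_* ∈ (0,1), there exists ε > 0 depending only on s_*, s^*, τ_* such that spec(T) ⊂ [−1, 1−ε] uniformly for all τ ∈ [0, 1−τ_*] and η ∈ (0,1]. -/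
open Matrix

/-- The spectral radius of a real matrix (as a real number), computed via the
complex spectrum. -/
noncomputable def specRad {n : ℕ} (S : Matrix (Fin n) (Fin n) ℝ) : ℝ :=
  (spectralRadius ℂ (S.map (algebraMap ℝ ℂ))).toReal

/-- The Dyson equation together with positivity of the solution. -/
def IsDysonSolution {n : ℕ} (S : Matrix (Fin n) (Fin n) ℝ) (τ η : ℝ)
    (v₁ v₂ : Fin n → ℝ) : Prop :=
  (∀ i, 0 < v₁ i) ∧ (∀ i, 0 < v₂ i) ∧
  (∀ i, 1 / v₁ i = η + S.mulVec v₂ i + τ / (η + S.transpose.mulVec v₁ i)) ∧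
  (∀ i, 1 / v₂ i = η + S.transpose.mulVec v₁ i + τ / (η + S.mulVec v₂ i))

/-- The auxiliary vector `u = v₁/(η + Sᵗ v₁)`. -/
noncomputable def uvec {n : ℕ} (S : Matrix (Fin n) (Fin n) ℝ) (η : ℝ)
    (v₁ : Fin n → ℝ) : Fin n → ℝ :=
  fun i => v₁ i / (η + S.transpose.mulVec v₁ i)

/-- The matrix `T`, acting on `y = (y₁, y₂)` by
`T y = ((−v₁v₂ y₁ + τu² y₂)/u, (τu² y₁ − v₁v₂ y₂)/u)`. -/
noncomputable def TM {n : ℕ} (τ : ℝ) (v₁ v₂ u : Fin n → ℝ) :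
    Matrix (Fin n ⊕ Fin n) (Fin n ⊕ Fin n) ℝ :=
  Matrix.fromBlocks
    (Matrix.diagonal fun i => -(v₁ i * v₂ i) / u i)
    (Matrix.diagonal fun i => τ * (u i) ^ 2 / u i)
    (Matrix.diagonal fun i => τ * (u i) ^ 2 / u i)
    (Matrix.diagonal fun i => -(v₁ i * v₂ i) / u i)

/-- The ℓ² → ℓ² operator norm of a real matrix. -/
noncomputable def opNorm2 {m : Type*} [Fintype m] [DecidableEq m]
    (A : Matrix m m ℝ) : ℝ :=
  ‖LinearMap.toContinuousLinearMap (Matrix.toEuclideanLin A)‖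

/-- The ℓ^∞ → ℓ^∞ operator norm of a real matrix (with respect to the sup
norm on vectors). -/
noncomputable def opNormInf {m : Type*} [Fintype m] (A : Matrix m m ℝ) : ℝ :=
  sSup {r : ℝ | ∃ x : m → ℝ, ‖x‖ ≤ 1 ∧ r = ‖A.mulVec x‖}

lemma fromBlocksDiag_mulVec {n : ℕ} {α : Type*} [CommRing α]
    (dA dB : Fin n → α) (x : Fin n ⊕ Fin n → α) :
    (fromBlocks (diagonal dA) (diagonal dB) (diagonal dB) (diagonal dA)).mulVec x =
      Sum.elim (fun i => dA i * x (Sum.inl i) + dB i * x (Sum.inr i))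
        (fun i => dB i * x (Sum.inl i) + dA i * x (Sum.inr i)) := by
  rw [fromBlocks_mulVec]
  funext k
  cases k <;> simp [Matrix.mulVec_diagonal, Function.comp]

lemma cw_exists {n : ℕ} (hn : 1 ≤ n) (S : Matrix (Fin n) (Fin n) ℝ)
    (hS : ∀ i j, 0 ≤ S i j) (hrad : specRad S = 1)
    (w : Fin n → ℝ) (hw : ∀ i, 0 < w i) :
    ∃ i, w i ≤ S.mulVec w i := by
  by_contra hcon
  push_neg at hcon
  have hne : Nonempty (Fin n) := ⟨⟨0, hn⟩⟩
  have hune : (Finset.univ : Finset (Fin n)).Nonempty := Finset.univ_nonempty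
  set c : ℝ := Finset.univ.sup' hune (fun i => S.mulVec w i / w i) with hc
  have hcb : ∀ i, S.mulVec w i ≤ c * w i := by
    intro i
    have h1 : S.mulVec w i / w i ≤ c :=
      Finset.le_sup' (fun i => S.mulVec w i / w i) (Finset.mem_univ i)
    calc S.mulVec w i = (S.mulVec w i / w i) * w i := (div_mul_cancel₀ _ (hw i).ne').symm
      _ ≤ c * w i := mul_le_mul_of_nonneg_right h1 (hw i).le
  have hc1 : c < 1 := by
    rw [hc]
    refine (Finset.sup'_lt_iff hune).mpr fun i _ => ?_
    exact (div_lt_one (hw i)).mpr (hcon i)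
  have hc0 : 0 ≤ c := by
    obtain ⟨i⟩ := hne
    refine le_trans ?_ (Finset.le_sup' (fun i => S.mulVec w i / w i) (Finset.mem_univ i))
    have hmv : 0 ≤ S.mulVec w i := by
      simp only [Matrix.mulVec, dotProduct]
      exact Finset.sum_nonneg fun j _ => mul_nonneg (hS i j) (hw j).le
    exact div_nonneg hmv (hw i).le
  have hall : ∀ μ ∈ spectrum ℂ (S.map (algebraMap ℝ ℂ)), ‖μ‖ ≤ c := by
    intro μ hμ
    rw [spectrum.mem_iff] at hμ
    have hdet : (algebraMap ℂ (Matrix (Fin n) (Fin n) ℂ) μ - S.map (algebraMap ℝ ℂ)).det = 0 := by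
      by_contra hd
      exact hμ ((Matrix.isUnit_iff_isUnit_det _).mpr (Ne.isUnit hd))
    obtain ⟨x, hx0, hxz⟩ := Matrix.exists_mulVec_eq_zero_iff.mpr hdet
    have hMx : (S.map (algebraMap ℝ ℂ)).mulVec x = μ • x := by
      rw [Matrix.sub_mulVec] at hxz
      have h2 : (algebraMap ℂ (Matrix (Fin n) (Fin n) ℂ) μ).mulVec x = μ • x := by
        rw [Algebra.algebraMap_eq_smul_one, Matrix.smul_mulVec, Matrix.one_mulVec]
      rw [h2] at hxz
      exact (sub_eq_zero.mp hxz).symm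
    obtain ⟨i₀, _, hi₀⟩ := Finset.exists_mem_eq_sup' hune (fun i => ‖x i‖ / w i)
    have hle : ∀ j, ‖x j‖ / w j ≤ ‖x i₀‖ / w i₀ := fun j =>
      le_of_le_of_eq (Finset.le_sup' (fun i => ‖x i‖ / w i) (Finset.mem_univ j)) hi₀
    have hkey : ∀ j, ‖x j‖ ≤ (‖x i₀‖ / w i₀) * w j := by
      intro j
      calc ‖x j‖ = (‖x j‖ / w j) * w j := (div_mul_cancel₀ _ (hw j).ne').symm
        _ ≤ (‖x i₀‖ / w i₀) * w j := mul_le_mul_of_nonneg_right (hle j) (hw j).le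
    have hm0 : 0 < ‖x i₀‖ / w i₀ := by
      obtain ⟨j, hj⟩ := Function.ne_iff.mp hx0
      have h1 : 0 < ‖x j‖ / w j := div_pos (norm_pos_iff.mpr hj) (hw j)
      linarith [hle j]
    have hnorm : ‖x i₀‖ = (‖x i₀‖ / w i₀) * w i₀ := (div_mul_cancel₀ _ (hw i₀).ne').symm
    have hrow : μ * x i₀ = ∑ j, (S i₀ j : ℂ) * x j := by
      have h1 := congrFun hMx i₀
      simp only [Pi.smul_apply, smul_eq_mul] at h1
      rw [← h1]
      simp [Matrix.mulVec, dotProduct, Matrix.map_apply, Complex.coe_algebraMap]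
    have hbound : ‖μ‖ * ((‖x i₀‖ / w i₀) * w i₀) ≤ c * ((‖x i₀‖ / w i₀) * w i₀) := by
      calc ‖μ‖ * ((‖x i₀‖ / w i₀) * w i₀) = ‖μ‖ * ‖x i₀‖ := by rw [← hnorm]
        _ = ‖μ * x i₀‖ := (norm_mul _ _).symm
        _ = ‖∑ j, (S i₀ j : ℂ) * x j‖ := by rw [hrow]
        _ ≤ ∑ j, ‖(S i₀ j : ℂ) * x j‖ := norm_sum_le _ _
        _ = ∑ j, S i₀ j * ‖x j‖ := by
            refine Finset.sum_congr rfl fun j _ => ?_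
            rw [norm_mul, Complex.norm_real, Real.norm_of_nonneg (hS i₀ j)]
        _ ≤ ∑ j, S i₀ j * ((‖x i₀‖ / w i₀) * w j) :=
            Finset.sum_le_sum fun j _ => mul_le_mul_of_nonneg_left (hkey j) (hS i₀ j)
        _ = (‖x i₀‖ / w i₀) * S.mulVec w i₀ := by
            simp only [Matrix.mulVec, dotProduct, Finset.mul_sum]
            exact Finset.sum_congr rfl fun j _ => by ring
        _ ≤ (‖x i₀‖ / w i₀) * (c * w i₀) := mul_le_mul_of_nonneg_left (hcb i₀) hm0.le
        _ = c * ((‖x i₀‖ / w i₀) * w i₀) := by ring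
    exact le_of_mul_le_mul_right hbound (mul_pos hm0 (hw i₀))
  have hsr : spectralRadius ℂ (S.map (algebraMap ℝ ℂ)) ≤ ENNReal.ofReal c := by
    rw [spectralRadius]
    refine iSup₂_le fun μ hμ => ?_
    rw [show ((‖μ‖₊ : NNReal) : ENNReal) = ENNReal.ofReal ‖μ‖ from (ofReal_norm μ).symm]
    exact ENNReal.ofReal_le_ofReal (hall μ hμ)
  have hle2 : specRad S ≤ c := by
    rw [specRad]
    calc (spectralRadius ℂ (S.map (algebraMap ℝ ℂ))).toReal
        ≤ (ENNReal.ofReal c).toReal := ENNReal.toReal_mono (by simp) hsr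
      _ = c := ENNReal.toReal_ofReal hc0
  rw [hrad] at hle2
  linarith

lemma TM_conj {n : ℕ} (τ : ℝ) (v₁ v₂ u : Fin n → ℝ)
    (hu : ∀ i, u i ≠ 0) (hab : ∀ i, v₁ i * v₂ i / u i + τ * u i = 1) :
    TM τ v₁ v₂ u =
      (fromBlocks 1 1 1 (-1)) *
        (diagonal (Sum.elim (fun i => τ * u i - v₁ i * v₂ i / u i) (fun _ : Fin n => (-1:ℝ)))) *
        ((2⁻¹ : ℝ) • fromBlocks 1 1 1 (-1)) := by
  unfold TM
  rw [← fromBlocks_diagonal, mul_smul_comm, fromBlocks_multiply, fromBlocks_multiply,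
    fromBlocks_smul, Matrix.fromBlocks_inj]
  refine ⟨?_, ?_, ?_, ?_⟩ <;>
  · simp only [Matrix.one_mul, Matrix.mul_one, Matrix.mul_zero, Matrix.zero_mul,
      zero_add, add_zero, Matrix.mul_neg, Matrix.neg_mul, neg_neg]
    ext i j
    by_cases h : i = j
    · subst h
      have huu : τ * u i ^ 2 / u i = τ * u i := by
        field_simp [hu i]
      simp only [Matrix.smul_apply, Matrix.add_apply, Matrix.neg_apply,
        Matrix.diagonal_apply_eq, smul_eq_mul, huu]
      first
        | linear_combination ((1:ℝ)/2) * hab i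
        | linear_combination (-(1:ℝ)/2) * hab i
    · simp [Matrix.diagonal_apply_ne _ h, Matrix.one_apply_ne h]

lemma spectrum_TM {n : ℕ} (hn : 1 ≤ n) (τ : ℝ) (v₁ v₂ u : Fin n → ℝ)
    (hu : ∀ i, u i ≠ 0) (hab : ∀ i, v₁ i * v₂ i / u i + τ * u i = 1) :
    spectrum ℝ (TM τ v₁ v₂ u) =
      {-1} ∪ Set.range (fun i : Fin n => τ * u i - v₁ i * v₂ i / u i) := by
  have hne : Nonempty (Fin n) := ⟨⟨0, hn⟩⟩
  set X : Matrix (Fin n ⊕ Fin n) (Fin n ⊕ Fin n) ℝ := fromBlocks 1 1 1 (-1) with hX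
  have h2 : (2⁻¹:ℝ) • ((1 : Matrix (Fin n) (Fin n) ℝ) + 1) = 1 := by
    rw [← two_smul ℝ (1 : Matrix (Fin n) (Fin n) ℝ), smul_smul]
    norm_num
  have hXinv : X * ((2⁻¹:ℝ) • X) = 1 := by
    rw [hX, mul_smul_comm, fromBlocks_multiply]
    simp only [Matrix.one_mul, Matrix.mul_one, Matrix.mul_neg, Matrix.neg_mul, neg_neg,
      add_neg_cancel, neg_add_cancel, fromBlocks_smul, smul_zero, h2]
    exact fromBlocks_one
  have hXinv' : ((2⁻¹:ℝ) • X) * X = 1 := by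
    rw [hX, smul_mul_assoc, fromBlocks_multiply]
    simp only [Matrix.one_mul, Matrix.mul_one, Matrix.mul_neg, Matrix.neg_mul, neg_neg,
      add_neg_cancel, neg_add_cancel, fromBlocks_smul, smul_zero, h2]
    exact fromBlocks_one
  set g : (Matrix (Fin n ⊕ Fin n) (Fin n ⊕ Fin n) ℝ)ˣ := ⟨X, (2⁻¹:ℝ) • X, hXinv, hXinv'⟩ with hg
  have hspec : spectrum ℝ (TM τ v₁ v₂ u) =
      spectrum ℝ (diagonal (Sum.elim (fun i => τ * u i - v₁ i * v₂ i / u i)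
        (fun _ : Fin n => (-1:ℝ)))) := by
    rw [TM_conj τ v₁ v₂ u hu hab]
    exact spectrum.units_conjugate (R := ℝ)
      (a := diagonal (Sum.elim (fun i => τ * u i - v₁ i * v₂ i / u i)
        (fun _ : Fin n => (-1:ℝ)))) (u := g)
  rw [hspec, spectrum_diagonal, Set.Sum.elim_range, Set.range_const]
  exact Set.union_comm _ _

lemma abound {a t τ τs : ℝ} (haD : a * (t + τ) = t) (h1 : 1 < t + τ)
    (hτ : 0 ≤ τ) (hτub : τ ≤ 1 - τs) (hτs : 0 < τs) : τs ≤ a := by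
  have ht : τs < t := by linarith
  nlinarith [mul_nonneg (by linarith : (0:ℝ) ≤ t - τs) (by linarith : (0:ℝ) ≤ 1 - τs),
    mul_nonneg (by linarith : (0:ℝ) ≤ 1 - τs - τ) hτs.le]

set_option maxHeartbeats 1600000 in
/-- **Spectral properties of `T`:** `‖T‖₂ = ‖T‖_{∞→∞} = 1`; the spectrum of
`T` is `{−1} ∪ {τuᵢ − (v₁v₂)ᵢ/uᵢ}`; if `τ = 0` then `T = −Id`, and if `τ > 0`
the eigenspace of `T` for the eigenvalue `−1` is `{(y, −y) : y ∈ ℂⁿ}`;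
moreover, for `τ ∈ [0, 1−τ⁎]` and `η ∈ (0,1]` the spectrum lies in
`[−1, 1−ε]` with `ε` depending only on `s⁎, s⁺, τ⁎`. -/
theorem spectral_properties_of_T
    (sl su τs : ℝ) (hsl : 0 < sl) (hslsu : sl ≤ su)
    (hτs : 0 < τs) (hτs1 : τs < 1) :
    ∃ ε > (0:ℝ),
      ∀ (n : ℕ), 1 ≤ n → ∀ S : Matrix (Fin n) (Fin n) ℝ,
        (∀ i j, sl / n ≤ S i j ∧ S i j ≤ su / n) → specRad S = 1 →
        ∀ τ η : ℝ, 0 ≤ τ → 0 < η →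
        ∀ v₁ v₂ : Fin n → ℝ, IsDysonSolution S τ η v₁ v₂ →
          -- (i) both operator norms are 1
          (opNorm2 (TM τ v₁ v₂ (uvec S η v₁)) = 1 ∧
            opNormInf (TM τ v₁ v₂ (uvec S η v₁)) = 1) ∧
          -- (ii) the spectrum of `T`
          (spectrum ℝ (TM τ v₁ v₂ (uvec S η v₁)) =
            {-1} ∪ Set.range (fun i : Fin n =>
              τ * uvec S η v₁ i - v₁ i * v₂ i / uvec S η v₁ i)) ∧
          -- (iii) `T = −Id` for `τ = 0`, and the `−1`-eigenspace for `τ > 0`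
          (τ = 0 → TM τ v₁ v₂ (uvec S η v₁) = -1) ∧
          (0 < τ →
            {x : Fin n ⊕ Fin n → ℂ |
                ((TM τ v₁ v₂ (uvec S η v₁)).map (Complex.ofReal)).mulVec x
                  = -x} =
              {x : Fin n ⊕ Fin n → ℂ |
                ∃ y : Fin n → ℂ, x = Sum.elim y (-y)}) ∧
          -- (iv) the spectrum is away from 1 in the inside regime
          (τ ≤ 1 - τs → η ≤ 1 →
            spectrum ℝ (TM τ v₁ v₂ (uvec S η v₁)) ⊆
              Set.Icc (-1 : ℝ) (1 - ε)) := by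
  have hsu : 0 < su := lt_of_lt_of_le hsl hslsu
  refine ⟨τs * sl ^ 2 / su ^ 2, by positivity, ?_⟩
  intro n hn S hS hrad τ η hτ hη v₁ v₂ hD
  obtain ⟨hv₁, hv₂, he₁, he₂⟩ := hD
  have hne : Nonempty (Fin n) := ⟨⟨0, hn⟩⟩
  have hnR : (0:ℝ) < (n:ℝ) := by
    have : (1:ℝ) ≤ (n:ℝ) := by exact_mod_cast hn
    linarith
  have hSpos : ∀ i j, 0 < S i j := fun i j =>
    lt_of_lt_of_le (by positivity) (hS i j).1
  have hmulPos : ∀ (M : Matrix (Fin n) (Fin n) ℝ), (∀ i j, 0 < M i j) →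
      ∀ (w : Fin n → ℝ), (∀ i, 0 < w i) → ∀ i, 0 < M.mulVec w i := by
    intro M hM w hw i
    simp only [Matrix.mulVec, dotProduct]
    exact Finset.sum_pos (fun j _ => mul_pos (hM i j) (hw j)) Finset.univ_nonempty
  have hP : ∀ i, 0 < η + S.transpose.mulVec v₁ i := fun i =>
    add_pos hη (hmulPos _ (fun i j => by rw [Matrix.transpose_apply]; exact hSpos j i) v₁ hv₁ i)
  have hQ : ∀ i, 0 < η + S.mulVec v₂ i := fun i => add_pos hη (hmulPos S hSpos v₂ hv₂ i)
  have e1 : ∀ i, (η + S.transpose.mulVec v₁ i) =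
      v₁ i * ((η + S.transpose.mulVec v₁ i) * (η + S.mulVec v₂ i) + τ) := by
    intro i
    have h := he₁ i
    have h1 : v₁ i ≠ 0 := (hv₁ i).ne'
    have h2 : (η + S.transpose.mulVec v₁ i) ≠ 0 := (hP i).ne'
    field_simp at h
    linear_combination h
  have e2 : ∀ i, (η + S.mulVec v₂ i) =
      v₂ i * ((η + S.transpose.mulVec v₁ i) * (η + S.mulVec v₂ i) + τ) := by
    intro i
    have h := he₂ i
    have h1 : v₂ i ≠ 0 := (hv₂ i).ne'
    have h2 : (η + S.mulVec v₂ i) ≠ 0 := (hQ i).ne'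
    field_simp at h
    linear_combination h
  have hupos : ∀ i, 0 < uvec S η v₁ i := fun i => div_pos (hv₁ i) (hP i)
  have hcross : ∀ i, v₂ i * (η + S.transpose.mulVec v₁ i) = v₁ i * (η + S.mulVec v₂ i) :=
    fun i => by linear_combination v₂ i * e1 i - v₁ i * e2 i
  have hA : ∀ i, v₁ i * v₂ i / uvec S η v₁ i = v₂ i * (η + S.transpose.mulVec v₁ i) := by
    intro i
    show v₁ i * v₂ i / (v₁ i / (η + S.transpose.mulVec v₁ i)) = _
    rw [div_div_eq_mul_div, div_eq_iff (hv₁ i).ne']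
    ring
  have hB : ∀ i, τ * uvec S η v₁ i = 1 - v₂ i * (η + S.transpose.mulVec v₁ i) := by
    intro i
    show τ * (v₁ i / (η + S.transpose.mulVec v₁ i)) = _
    rw [← mul_div_assoc, div_eq_iff (hP i).ne']
    linear_combination (-1 : ℝ) * e1 i + (η + S.transpose.mulVec v₁ i) * hcross i
  have hab : ∀ i, v₁ i * v₂ i / uvec S η v₁ i + τ * uvec S η v₁ i = 1 := by
    intro i
    rw [hA i, hB i]
    ring
  have hapos : ∀ i, 0 < v₂ i * (η + S.transpose.mulVec v₁ i) :=
    fun i => mul_pos (hv₂ i) (hP i)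
  have hale : ∀ i, v₂ i * (η + S.transpose.mulVec v₁ i) ≤ 1 := by
    intro i
    have h1 : 0 ≤ τ * uvec S η v₁ i := mul_nonneg hτ (hupos i).le
    linarith [hB i]
  -- TM in terms of a := v₂ * P
  have hTMeq : TM τ v₁ v₂ (uvec S η v₁) =
      fromBlocks
        (diagonal fun i => -(v₂ i * (η + S.transpose.mulVec v₁ i)))
        (diagonal fun i => 1 - v₂ i * (η + S.transpose.mulVec v₁ i))
        (diagonal fun i => 1 - v₂ i * (η + S.transpose.mulVec v₁ i))
        (diagonal fun i => -(v₂ i * (η + S.transpose.mulVec v₁ i))) := by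
    unfold TM
    rw [Matrix.fromBlocks_inj]
    have hdA : (fun i => -(v₁ i * v₂ i) / uvec S η v₁ i) =
        fun i => -(v₂ i * (η + S.transpose.mulVec v₁ i)) := by
      funext i
      rw [neg_div, hA i]
    have hdB : (fun i => τ * (uvec S η v₁ i) ^ 2 / uvec S η v₁ i) =
        fun i => 1 - v₂ i * (η + S.transpose.mulVec v₁ i) := by
      funext i
      have huu : τ * uvec S η v₁ i ^ 2 / uvec S η v₁ i = τ * uvec S η v₁ i := by
        field_simp [(hupos i).ne']
        try ring
      rw [huu, hB i]
    exact ⟨by rw [hdA], by rw [hdB], by rw [hdB], by rw [hdA]⟩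
  have hrow : ∀ x : Fin n ⊕ Fin n → ℝ, (TM τ v₁ v₂ (uvec S η v₁)).mulVec x =
      Sum.elim
        (fun i => -(v₂ i * (η + S.transpose.mulVec v₁ i)) * x (Sum.inl i) +
          (1 - v₂ i * (η + S.transpose.mulVec v₁ i)) * x (Sum.inr i))
        (fun i => (1 - v₂ i * (η + S.transpose.mulVec v₁ i)) * x (Sum.inl i) +
          -(v₂ i * (η + S.transpose.mulVec v₁ i)) * x (Sum.inr i)) := by
    intro x
    rw [hTMeq, fromBlocksDiag_mulVec]
  set z : Fin n ⊕ Fin n → ℝ := Sum.elim (fun _ => (1:ℝ)) (fun _ => (-1:ℝ)) with hzdef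
  have hz : (TM τ v₁ v₂ (uvec S η v₁)).mulVec z = -z := by
    rw [hrow]
    funext k
    cases k <;> simp [hzdef] <;> ring
  have hznorm : ‖z‖ = 1 := by
    apply le_antisymm
    · apply (pi_norm_le_iff_of_nonneg zero_le_one).mpr
      intro k
      cases k <;> simp [hzdef]
    · have h := norm_le_pi_norm z (Sum.inl (⟨0, hn⟩ : Fin n))
      have h1 : z (Sum.inl (⟨0, hn⟩ : Fin n)) = 1 := rfl
      rw [h1, norm_one] at h
      exact h
  refine ⟨⟨?_, ?_⟩, ?_, ?_, ?_, ?_⟩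
  · -- opNorm2 = 1
    rw [opNorm2]
    apply le_antisymm
    · apply ContinuousLinearMap.opNorm_le_bound _ zero_le_one
      intro x
      rw [one_mul]
      have hax : (LinearMap.toContinuousLinearMap (toEuclideanLin (TM τ v₁ v₂ (uvec S η v₁)))) x
          = (WithLp.equiv 2 ((Fin n ⊕ Fin n) → ℝ)).symm
            ((TM τ v₁ v₂ (uvec S η v₁)).mulVec ((WithLp.equiv 2 ((Fin n ⊕ Fin n) → ℝ)) x)) := by
        simp [Matrix.toEuclideanLin_apply]
      rw [hax, EuclideanSpace.norm_eq, EuclideanSpace.norm_eq]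
      apply Real.sqrt_le_sqrt
      rw [Fintype.sum_sum_type, Fintype.sum_sum_type,
        ← Finset.sum_add_distrib, ← Finset.sum_add_distrib]
      apply Finset.sum_le_sum
      intro i _
      have h1 := hapos i
      have h2 := hale i
      simp only [hrow, WithLp.equiv_symm_apply, WithLp.equiv_apply, PiLp.toLp_apply,
        Sum.elim_inl, Sum.elim_inr, Real.norm_eq_abs, sq_abs]
      nlinarith [sq_nonneg (x (Sum.inl i) + x (Sum.inr i)),
        mul_nonneg h1.le (by linarith : (0:ℝ) ≤ 1 - v₂ i * (η + S.transpose.mulVec v₁ i))]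
    · set x₀ : EuclideanSpace ℝ (Fin n ⊕ Fin n) :=
        (WithLp.equiv 2 ((Fin n ⊕ Fin n) → ℝ)).symm z with hx₀
      have hLx : (LinearMap.toContinuousLinearMap
          (toEuclideanLin (TM τ v₁ v₂ (uvec S η v₁)))) x₀ = -x₀ := by
        ext k
        simp [Matrix.toEuclideanLin_apply, hx₀, Equiv.apply_symm_apply, hz,
          WithLp.equiv_symm_apply]
      have hx₀norm : 0 < ‖x₀‖ := by
        rw [norm_pos_iff]
        intro h0
        have h1 := congrArg (fun v : EuclideanSpace ℝ (Fin n ⊕ Fin n) => v (Sum.inl (⟨0, hn⟩ : Fin n))) h0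
        simp only [hx₀, WithLp.equiv_symm_apply, PiLp.toLp_apply, hzdef, Sum.elim_inl] at h1
        norm_num at h1
      have h := ContinuousLinearMap.le_opNorm
        (LinearMap.toContinuousLinearMap (toEuclideanLin (TM τ v₁ v₂ (uvec S η v₁)))) x₀
      rw [hLx, norm_neg] at h
      have h' : 1 * ‖x₀‖ ≤ ‖LinearMap.toContinuousLinearMap
          (toEuclideanLin (TM τ v₁ v₂ (uvec S η v₁)))‖ * ‖x₀‖ := by
        rw [one_mul]; exact h
      exact le_of_mul_le_mul_right h' hx₀norm
  · -- opNormInf = 1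
    rw [opNormInf]
    have hgreat : IsGreatest {r : ℝ | ∃ x : (Fin n ⊕ Fin n) → ℝ, ‖x‖ ≤ 1 ∧
        r = ‖(TM τ v₁ v₂ (uvec S η v₁)).mulVec x‖} 1 := by
      constructor
      · exact ⟨z, le_of_eq hznorm, by rw [hz, norm_neg, hznorm]⟩
      · rintro r ⟨x, hx, rfl⟩
        apply (pi_norm_le_iff_of_nonneg zero_le_one).mpr
        intro k
        have hxb : ∀ k', |x k'| ≤ 1 := fun k' =>
          le_trans (le_trans (le_of_eq (Real.norm_eq_abs _).symm) (norm_le_pi_norm x k')) hx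
        rw [hrow]
        cases k with
        | inl i =>
          have hp := abs_le.mp (hxb (Sum.inl i))
          have hq := abs_le.mp (hxb (Sum.inr i))
          have h1 := hapos i
          have h2 := hale i
          simp only [Sum.elim_inl, Real.norm_eq_abs]
          rw [abs_le]
          constructor <;> nlinarith [hp.1, hp.2, hq.1, hq.2]
        | inr i =>
          have hp := abs_le.mp (hxb (Sum.inl i))
          have hq := abs_le.mp (hxb (Sum.inr i))
          have h1 := hapos i
          have h2 := hale i
          simp only [Sum.elim_inr, Real.norm_eq_abs]
          rw [abs_le]
          constructor <;> nlinarith [hp.1, hp.2, hq.1, hq.2]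
    exact hgreat.csSup_eq
  · -- spectrum
    exact spectrum_TM hn τ v₁ v₂ (uvec S η v₁) (fun i => (hupos i).ne') hab
  · -- τ = 0
    intro h0
    subst h0
    have ha1 : ∀ i, v₂ i * (η + S.transpose.mulVec v₁ i) = 1 := by
      intro i
      have hb := hB i
      rw [zero_mul] at hb
      linarith
    rw [hTMeq]
    ext k l
    rcases k with i | i <;> rcases l with j | j <;>
      by_cases h : i = j <;>
      simp [h, Matrix.diagonal_apply, Matrix.one_apply, ha1, Matrix.neg_apply]
  · -- eigenspace for τ > 0
    intro hτpos
    have hCrow : ∀ x : Fin n ⊕ Fin n → ℂ,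
        ((TM τ v₁ v₂ (uvec S η v₁)).map (Complex.ofReal)).mulVec x =
        Sum.elim
          (fun i => (↑(-(v₂ i * (η + S.transpose.mulVec v₁ i))) : ℂ) * x (Sum.inl i) +
            (↑(1 - v₂ i * (η + S.transpose.mulVec v₁ i)) : ℂ) * x (Sum.inr i))
          (fun i => (↑(1 - v₂ i * (η + S.transpose.mulVec v₁ i)) : ℂ) * x (Sum.inl i) +
            (↑(-(v₂ i * (η + S.transpose.mulVec v₁ i))) : ℂ) * x (Sum.inr i)) := by
      intro x
      rw [hTMeq]
      simp only [fromBlocks_map, Matrix.diagonal_map Complex.ofReal_zero]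
      rw [fromBlocksDiag_mulVec]
    ext x
    simp only [Set.mem_setOf_eq]
    constructor
    · intro hx
      rw [hCrow] at hx
      refine ⟨fun i => x (Sum.inl i), ?_⟩
      funext k
      cases k with
      | inl i => simp
      | inr i =>
        have hxi := congrFun hx (Sum.inl i)
        simp only [Sum.elim_inl, Pi.neg_apply] at hxi
        have hbpos : 0 < 1 - v₂ i * (η + S.transpose.mulVec v₁ i) := by
          have h := mul_pos hτpos (hupos i)
          rw [hB i] at h
          exact h
        have hbne : ((1 - v₂ i * (η + S.transpose.mulVec v₁ i) : ℝ) : ℂ) ≠ 0 :=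
          Complex.ofReal_ne_zero.mpr hbpos.ne'
        have hsum0 : ((1 - v₂ i * (η + S.transpose.mulVec v₁ i) : ℝ) : ℂ) *
            (x (Sum.inl i) + x (Sum.inr i)) = 0 := by
          push_cast at hxi ⊢
          linear_combination hxi
        have hz0 := (mul_eq_zero.mp hsum0).resolve_left hbne
        simp only [Sum.elim_inr, Pi.neg_apply]
        linear_combination hz0
    · rintro ⟨y, rfl⟩
      rw [hCrow]
      funext k
      cases k with
      | inl i =>
        simp only [Sum.elim_inl, Sum.elim_inr, Pi.neg_apply]
        push_cast
        ring
      | inr i =>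
        simp only [Sum.elim_inl, Sum.elim_inr, Pi.neg_apply]
        push_cast
        ring
  · -- spectrum inclusion in the inside regime
    intro hτub hη1
    rw [spectrum_TM hn τ v₁ v₂ (uvec S η v₁) (fun i => (hupos i).ne') hab]
    obtain ⟨i₀, hi₀⟩ := cw_exists hn S (fun i j => (hSpos i j).le) hrad v₂ hv₂
    have hD1 : 1 < (η + S.transpose.mulVec v₁ i₀) * (η + S.mulVec v₂ i₀) + τ := by
      by_contra hle
      push_neg at hle
      have h1 : v₂ i₀ * ((η + S.transpose.mulVec v₁ i₀) * (η + S.mulVec v₂ i₀) + τ) ≤ v₂ i₀ :=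
        mul_le_of_le_one_right (hv₂ i₀).le hle
      have h2 : η + S.mulVec v₂ i₀ ≤ v₂ i₀ := by rw [e2 i₀]; exact h1
      linarith [hi₀, hη]
    have haD : v₂ i₀ * (η + S.transpose.mulVec v₁ i₀) *
        ((η + S.transpose.mulVec v₁ i₀) * (η + S.mulVec v₂ i₀) + τ) =
        (η + S.transpose.mulVec v₁ i₀) * (η + S.mulVec v₂ i₀) := by
      first
        | linear_combination (η + S.transpose.mulVec v₁ i₀) * e2 i₀
        | linear_combination (-(η + S.transpose.mulVec v₁ i₀)) * e2 i₀
    have ha₀ : τs ≤ v₂ i₀ * (η + S.transpose.mulVec v₁ i₀) :=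
      abound haD hD1 hτ hτub hτs
    -- comparability
    have hsum₁ : ∀ i, sl / n * (∑ j, v₁ j) ≤ S.transpose.mulVec v₁ i ∧
        S.transpose.mulVec v₁ i ≤ su / n * (∑ j, v₁ j) := by
      intro i
      constructor
      · simp only [Matrix.mulVec, dotProduct, Finset.mul_sum]
        refine Finset.sum_le_sum fun j _ => ?_
        refine mul_le_mul_of_nonneg_right ?_ (hv₁ j).le
        rw [Matrix.transpose_apply]; exact (hS j i).1
      · simp only [Matrix.mulVec, dotProduct, Finset.mul_sum]
        refine Finset.sum_le_sum fun j _ => ?_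
        refine mul_le_mul_of_nonneg_right ?_ (hv₁ j).le
        rw [Matrix.transpose_apply]; exact (hS j i).2
    have hsum₂ : ∀ i, sl / n * (∑ j, v₂ j) ≤ S.mulVec v₂ i ∧
        S.mulVec v₂ i ≤ su / n * (∑ j, v₂ j) := by
      intro i
      constructor
      · simp only [Matrix.mulVec, dotProduct, Finset.mul_sum]
        exact Finset.sum_le_sum fun j _ => mul_le_mul_of_nonneg_right (hS i j).1 (hv₂ j).le
      · simp only [Matrix.mulVec, dotProduct, Finset.mul_sum]
        exact Finset.sum_le_sum fun j _ => mul_le_mul_of_nonneg_right (hS i j).2 (hv₂ j).le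
    have hT₁ : 0 ≤ ∑ j, v₁ j := Finset.sum_nonneg fun j _ => (hv₁ j).le
    have hT₂ : 0 ≤ ∑ j, v₂ j := Finset.sum_nonneg fun j _ => (hv₂ j).le
    have hPcmp : ∀ i j, sl * (η + S.transpose.mulVec v₁ j) ≤
        su * (η + S.transpose.mulVec v₁ i) := by
      intro i j
      have h1 := (hsum₁ j).2
      have h2 := (hsum₁ i).1
      have h3 : sl * (S.transpose.mulVec v₁ j) ≤ sl * (su / n * (∑ j, v₁ j)) :=
        mul_le_mul_of_nonneg_left h1 hsl.le
      have h4 : su * (sl / n * (∑ j, v₁ j)) ≤ su * (S.transpose.mulVec v₁ i) :=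
        mul_le_mul_of_nonneg_left h2 hsu.le
      have h5 : sl * η ≤ su * η := mul_le_mul_of_nonneg_right hslsu hη.le
      have h6 : sl * (su / n * (∑ j, v₁ j)) = su * (sl / n * (∑ j, v₁ j)) := by ring
      linarith [h3, h4, h5, h6]
    have hQcmp : ∀ i j, sl * (η + S.mulVec v₂ j) ≤ su * (η + S.mulVec v₂ i) := by
      intro i j
      have h1 := (hsum₂ j).2
      have h2 := (hsum₂ i).1
      have h3 : sl * (S.mulVec v₂ j) ≤ sl * (su / n * (∑ j, v₂ j)) :=
        mul_le_mul_of_nonneg_left h1 hsl.le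
      have h4 : su * (sl / n * (∑ j, v₂ j)) ≤ su * (S.mulVec v₂ i) :=
        mul_le_mul_of_nonneg_left h2 hsu.le
      have h5 : sl * η ≤ su * η := mul_le_mul_of_nonneg_right hslsu hη.le
      have h6 : sl * (su / n * (∑ j, v₂ j)) = su * (sl / n * (∑ j, v₂ j)) := by ring
      linarith [h3, h4, h5, h6]
    have hvR : ∀ i, v₂ i * ((η + S.transpose.mulVec v₁ i) + τ / (η + S.mulVec v₂ i)) = 1 := by
      intro i
      rw [← he₂ i, mul_one_div, div_self (hv₂ i).ne']
    have hRpos : ∀ i, 0 < (η + S.transpose.mulVec v₁ i) + τ / (η + S.mulVec v₂ i) :=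
      fun i => add_pos_of_pos_of_nonneg (hP i) (div_nonneg hτ (hQ i).le)
    have hRcmp : ∀ i j, sl * ((η + S.transpose.mulVec v₁ i) + τ / (η + S.mulVec v₂ i)) ≤
        su * ((η + S.transpose.mulVec v₁ j) + τ / (η + S.mulVec v₂ j)) := by
      intro i j
      have h1 := hPcmp j i
      have h2 : sl * (τ / (η + S.mulVec v₂ i)) ≤ su * (τ / (η + S.mulVec v₂ j)) := by
        rw [mul_div_assoc', mul_div_assoc', div_le_div_iff₀ (hQ i) (hQ j)]
        have h3 := hQcmp i j
        nlinarith [mul_le_mul_of_nonneg_left h3 hτ]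
      nlinarith [h1, h2]
    have hv₂cmp : ∀ i j, sl * v₂ j ≤ su * v₂ i := by
      intro i j
      calc sl * v₂ j
          = sl * v₂ j * (v₂ i * ((η + S.transpose.mulVec v₁ i) + τ / (η + S.mulVec v₂ i))) := by
            rw [hvR i]; ring
        _ = (sl * ((η + S.transpose.mulVec v₁ i) + τ / (η + S.mulVec v₂ i))) * (v₂ i * v₂ j) := by
            ring
        _ ≤ (su * ((η + S.transpose.mulVec v₁ j) + τ / (η + S.mulVec v₂ j))) * (v₂ i * v₂ j) :=
            mul_le_mul_of_nonneg_right (hRcmp i j)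
              (mul_nonneg (hv₂ i).le (hv₂ j).le)
        _ = su * v₂ i * (v₂ j * ((η + S.transpose.mulVec v₁ j) + τ / (η + S.mulVec v₂ j))) := by
            ring
        _ = su * v₂ i := by rw [hvR j]; ring
    have hfinal : ∀ i, τs * sl ^ 2 / su ^ 2 ≤ v₂ i * (η + S.transpose.mulVec v₁ i) := by
      intro i
      have h1 : sl * v₂ i₀ ≤ su * v₂ i := hv₂cmp i i₀
      have h2 : sl * (η + S.transpose.mulVec v₁ i₀) ≤ su * (η + S.transpose.mulVec v₁ i) :=
        hPcmp i i₀
      have h3 : (sl * v₂ i₀) * (sl * (η + S.transpose.mulVec v₁ i₀)) ≤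
          (su * v₂ i) * (su * (η + S.transpose.mulVec v₁ i)) :=
        mul_le_mul h1 h2 (mul_nonneg hsl.le (hP i₀).le) (mul_nonneg hsu.le (hv₂ i).le)
      rw [div_le_iff₀ (by positivity)]
      nlinarith [h3, mul_le_mul_of_nonneg_left ha₀ (mul_pos hsl hsl).le]
    have hε0 : (0:ℝ) ≤ τs * sl ^ 2 / su ^ 2 := by positivity
    have hε2 : τs * sl ^ 2 / su ^ 2 ≤ τs := by
      rw [div_le_iff₀ (by positivity)]
      nlinarith [sq_nonneg sl, sq_nonneg su, mul_le_mul hslsu hslsu hsl.le hsu.le]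
    intro μ hμ
    rcases hμ with hμ | ⟨i, rfl⟩
    · rw [Set.mem_singleton_iff] at hμ
      subst hμ
      rw [Set.mem_Icc]
      exact ⟨le_refl _, by linarith⟩
    · have hval : τ * uvec S η v₁ i - v₁ i * v₂ i / uvec S η v₁ i
          = 1 - 2 * (v₂ i * (η + S.transpose.mulVec v₁ i)) := by
        rw [hA i, hB i]; ring
      simp only [Set.mem_Icc]
      rw [hval]
      exact ⟨by linarith [hale i], by linarith [hfinal i]⟩
end

section
/- Contraction-Inversion Lemma: let n ≥ 1 and ε, η, c₁, c₂, c₃ > 0 with η ≤ εc₁/(2c₂²). Let A, B be Hermitian 2n×2n complex matrices with operator norms ‖A‖ ≤ 1 and ‖B‖ ≤ 1 − c₁η. Suppose there are unit vectors b₊, b₋ ∈ ℂ^{2n} with B b₊ = ‖B‖ b₊, B b₋ = −‖B‖ b₋, and ‖B x‖ ≤ (1−ε)‖x‖ for every x orthogonal to span{b₊, b₋}. Assume further ⟨b₊, A b₊⟩ ≤ 1 − ε and ‖(Id + A) b₋‖ ≤ c₂η. Then Id − AB is invertible and there is a constant C > 0, depending only on c₁, c₂, c₃ and ε, such that every p ∈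 ℂ^{2n} with |⟨b₋, p⟩| ≤ c₃η‖p‖ satisfies ‖(Id − AB)^{-1} p‖ ≤ C‖p‖. -/
set_option maxHeartbeats 4000000

open scoped ComplexInnerProductSpace

set_option maxHeartbeats 4000000

open scoped ComplexInnerProductSpace

variable {E : Type*} [NormedAddCommGroup E] [InnerProductSpace ℂ E] [CompleteSpace E]

lemma pyth3 (a b c : E) (hab : ⟪a, b⟫ = 0) (hac : ⟪a, c⟫ = 0) (hbc : ⟪b, c⟫ = 0) :
    ‖a + b + c‖ ^ 2 = ‖a‖ ^ 2 + ‖b‖ ^ 2 + ‖c‖ ^ 2 := by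
  have h1 := norm_add_sq_eq_norm_sq_add_norm_sq_of_inner_eq_zero (𝕜 := ℂ) (a + b) c
      (by rw [inner_add_left, hac, hbc, add_zero])
  have h2 := norm_add_sq_eq_norm_sq_add_norm_sq_of_inner_eq_zero (𝕜 := ℂ) a b hab
  nlinarith [h1, h2]

lemma key_estimate
    (ε c₁ c₂ c₃ η s δ : ℝ)
    (hε : 0 < ε) (hε2 : ε ≤ 1/2)
    (hc₁ : 0 < c₁) (hc₂ : 0 < c₂) (hc₃ : 0 < c₃) (hη : 0 < η)
    (hs0 : 0 < s) (hs3 : s ≤ 1/3) (hs5 : 2*c₂*s ≤ c₁/4)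
    (hδ0 : 0 < δ) (hδ1 : δ ≤ 1)
    (hd2 : (1+2*c₂/c₁)*δ + 2*Real.sqrt (2*δ/ε) ≤ ε*s^2)
    (hd3 : 2*δ ≤ ε*s^2)
    (hd4 : c₃*δ ≤ c₁/4)
    (A B : E →L[ℂ] E) (hA : IsSelfAdjoint A) (hB : IsSelfAdjoint B)
    (hAn : ‖A‖ ≤ 1) (hBn : ‖B‖ ≤ 1 - c₁*η)
    (bp bm : E) (hbp : ‖bp‖ = 1) (hbm : ‖bm‖ = 1)
    (hBp : B bp = (‖B‖:ℂ) • bp) (hBm : B bm = (-(‖B‖:ℝ) : ℂ) • bm)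
    (hgap : ∀ x : E, ⟪bp, x⟫ = 0 → ⟪bm, x⟫ = 0 → ‖B x‖ ≤ (1-ε)*‖x‖)
    (hApp : (⟪bp, A bp⟫).re ≤ 1 - ε)
    (hAmm : ‖(1+A) bm‖ ≤ c₂*η)
    (x : E) (hx : ‖⟪bm, x - A (B x)⟫‖ ≤ c₃*η*‖x - A (B x)‖) :
    ‖x‖ ≤ (1/δ) * ‖x - A (B x)‖ := by
  set p := x - A (B x) with hp
  set θ := ‖p‖ with hθdef
  set X := ‖x‖ with hXdef
  clear_value p θ X
  rcases le_or_gt (δ * X) θ with hcase | hcase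
  · have h1 : X * δ ≤ θ := by linarith [hcase, mul_comm δ X]
    calc X = X * δ / δ := by field_simp
    _ ≤ θ / δ := by gcongr
    _ = (1/δ) * θ := by ring
  -- contradiction branch
  exfalso
  have hθ0 : 0 ≤ θ := by rw [hθdef]; exact norm_nonneg p
  have hX0 : 0 < X := by
    rcases eq_or_lt_of_le (norm_nonneg x) with h | h
    · exfalso
      rw [hXdef, ← h] at hcase
      nlinarith
    · rw [hXdef]; exact h
  have hθX : θ < X := lt_of_lt_of_le hcase (by nlinarith)
  -- basic operator norm facts
  have hsA : ∀ u v : E, ⟪A u, v⟫ = ⟪u, A v⟫ := fun u v => hA.isSymmetric u v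
  have hsB : ∀ u v : E, ⟪B u, v⟫ = ⟪u, B v⟫ := fun u v => hB.isSymmetric u v
  have hABle : ∀ u : E, ‖A u‖ ≤ ‖u‖ := fun u => by
    calc ‖A u‖ ≤ ‖A‖ * ‖u‖ := A.le_opNorm u
    _ ≤ 1 * ‖u‖ := by nlinarith [norm_nonneg u]
    _ = ‖u‖ := one_mul _
  have hBle1 : ‖B‖ ≤ 1 := by nlinarith
  have hBxle : ‖B x‖ ≤ ‖B‖ * X := by rw [hXdef]; exact B.le_opNorm x
  have hXθBx : X - θ ≤ ‖B x‖ := by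
    have h1 : ‖x‖ ≤ ‖p‖ + ‖A (B x)‖ := by
      calc ‖x‖ = ‖p + A (B x)‖ := by rw [hp, sub_add_cancel]
      _ ≤ ‖p‖ + ‖A (B x)‖ := norm_add_le _ _
    have h2 := hABle (B x)
    linarith
  have hBXX : ‖B‖ * X ≤ (1 - c₁ * η) * X := mul_le_mul_of_nonneg_right hBn hX0.le
  have hc1ηθ : c₁ * η * X ≤ θ := by nlinarith [hXθBx, hBxle, hBXX]
  have hBpos : 0 < ‖B‖ := by
    have h1 : X - θ ≤ ‖B‖ * X := le_trans hXθBx hBxle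
    nlinarith
  -- orthogonality of bp and bm
  have horth : ⟪bp, bm⟫ = 0 := by
    have h1 : ⟪B bp, bm⟫ = ⟪bp, B bm⟫ := hsB bp bm
    rw [hBp, hBm, inner_smul_left, inner_smul_right] at h1
    have h2 : (starRingEnd ℂ) ((‖B‖:ℂ)) = (‖B‖:ℂ) := Complex.conj_ofReal _
    rw [h2] at h1
    have h3 : ((2*‖B‖ : ℝ):ℂ) * ⟪bp, bm⟫ = 0 := by
      push_cast
      ring_nf
      ring_nf at h1
      linear_combination h1
    rcases mul_eq_zero.1 h3 with h | h
    · exfalso; have := Complex.ofReal_eq_zero.1 h; nlinarith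
    · exact h
  have horth' : ⟪bm, bp⟫ = 0 := by
    rw [← inner_conj_symm, horth, map_zero]
  have hbp2 : ⟪bp, bp⟫ = 1 := by
    rw [inner_self_eq_norm_sq_to_K, hbp]; norm_num
  have hbm2 : ⟪bm, bm⟫ = 1 := by
    rw [inner_self_eq_norm_sq_to_K, hbm]; norm_num
  -- decomposition
  set α := ⟪bp, x⟫ with hα
  set β := ⟪bm, x⟫ with hβ
  set y := x - α • bp - β • bm with hy
  clear_value α β y
  have hxdec : x = α • bp + β • bm + y := by rw [hy]; abel
  have hyp : ⟪bp, y⟫ = 0 := by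
    rw [hy, inner_sub_right, inner_sub_right, inner_smul_right, inner_smul_right,
      hbp2, horth]
    simp [hα]
  have hym : ⟪bm, y⟫ = 0 := by
    rw [hy, inner_sub_right, inner_sub_right, inner_smul_right, inner_smul_right,
      hbm2, horth']
    simp [hβ]
  set a := ‖α‖ with ha
  set b := ‖β‖ with hb
  clear_value a b
  have ha0 : 0 ≤ a := by rw [ha]; exact norm_nonneg _
  have hb0 : 0 ≤ b := by rw [hb]; exact norm_nonneg _
  have hy0 : 0 ≤ ‖y‖ := norm_nonneg _
  have hX2 : X ^ 2 = a ^ 2 + b ^ 2 + ‖y‖ ^ 2 := by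
    have := pyth3 (α • bp) (β • bm) y
      (by rw [inner_smul_left, inner_smul_right, horth]; ring)
      (by rw [inner_smul_left, hyp]; ring)
      (by rw [inner_smul_left, hym]; ring)
    rw [hXdef]
    rw [hxdec, this, norm_smul, norm_smul, hbp, hbm]
    simp [ha, hb]
  -- B x decomposition
  have hBxdec : B x = α • ((‖B‖:ℂ) • bp) + β • ((-(‖B‖:ℝ):ℂ) • bm) + B y := by
    conv_lhs => rw [hxdec]
    rw [map_add, map_add, map_smul, map_smul, hBp, hBm]
  have hpBy : ⟪bp, B y⟫ = 0 := by
    rw [← hsB bp y, hBp, inner_smul_left, hyp, mul_zero]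
  have hmBy : ⟪bm, B y⟫ = 0 := by
    rw [← hsB bm y, hBm, inner_smul_left, hym, mul_zero]
  have hBy : ‖B y‖ ≤ (1-ε) * ‖y‖ := hgap y hyp hym
  have hBy' : ‖B y‖ ≤ ‖y‖ := le_trans hBy (by nlinarith)
  have hBx2 : ‖B x‖ ^ 2 = ‖B‖^2 * a^2 + ‖B‖^2 * b^2 + ‖B y‖^2 := by
    have := pyth3 (α • ((‖B‖:ℂ) • bp)) (β • ((-(‖B‖:ℝ):ℂ) • bm)) (B y)
      (by rw [inner_smul_left, inner_smul_right, inner_smul_left, inner_smul_right, horth]; ring)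
      (by rw [inner_smul_left, inner_smul_left, hpBy]; ring)
      (by rw [inner_smul_left, inner_smul_left, hmBy]; ring)
    rw [hBxdec, this, norm_smul, norm_smul, norm_smul, norm_smul, hbp, hbm]
    have : ‖((‖B‖:ℝ):ℂ)‖ = ‖B‖ := by
      rw [Complex.norm_real, Real.norm_eq_abs, abs_of_nonneg hBpos.le]
    have h2 : ‖((-(‖B‖:ℝ)):ℂ)‖ = ‖B‖ := by
      push_cast
      rw [norm_neg, Complex.norm_real, Real.norm_eq_abs, abs_of_nonneg hBpos.le]
    rw [this, h2, ← ha, ← hb]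
    ring
  -- step (1): y is small
  have hyX : ε * ‖y‖^2 ≤ 2 * θ * X := by
    have h1 : (X - θ)^2 ≤ ‖B x‖^2 := by
      have := hXθBx
      nlinarith [norm_nonneg (B x)]
    have h2 : ‖B y‖^2 ≤ (1-ε)^2 * ‖y‖^2 := by
      have := pow_le_pow_left₀ (norm_nonneg (B y)) hBy 2
      rw [mul_pow] at this
      exact this
    have hB2 : ‖B‖^2 ≤ 1 := by clear * - hBpos hBle1; nlinarith
    have h3 : ‖B x‖^2 ≤ a^2 + b^2 + (1-ε)^2 * ‖y‖^2 := by
      rw [hBx2]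
      clear * - hB2 h2
      nlinarith [h2, mul_nonneg (sub_nonneg.2 hB2) (sq_nonneg a),
        mul_nonneg (sub_nonneg.2 hB2) (sq_nonneg b)]
    have h4 : (1-ε)^2 * ‖y‖^2 ≤ ‖y‖^2 - ε * ‖y‖^2 := by
      clear * - hε hε2
      nlinarith [mul_nonneg (mul_nonneg hε.le (by linarith : (0:ℝ) ≤ 1 - ε)) (sq_nonneg ‖y‖)]
    clear * - h1 h2 h3 h4 hX2 hθ0 hX0 hθX
    nlinarith [hX2, sq_nonneg θ, sq_nonneg (X - θ), mul_nonneg hθ0 hX0.le]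
  -- the vector r = (1+A) bm
  have hr0 : ‖bm + A bm‖ ≤ c₂ * η := by
    have : (1 + A) bm = bm + A bm := by
      rw [ContinuousLinearMap.add_apply, ContinuousLinearMap.one_apply]
    rwa [this] at hAmm
  set r := bm + A bm with hrdef
  have hAbm : A bm = r - bm := by rw [hrdef]; abel
  have hr : ‖r‖ ≤ c₂ * η := hr0
  clear_value r
  have hnB : ‖((‖B‖:ℝ):ℂ)‖ = ‖B‖ := by
    rw [Complex.norm_real, Real.norm_eq_abs, abs_of_nonneg hBpos.le]
  have hnBm : ‖((-(‖B‖:ℝ)):ℂ)‖ = ‖B‖ := by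
    push_cast
    rw [norm_neg, Complex.norm_real, Real.norm_eq_abs, abs_of_nonneg hBpos.le]
  have hAbpn : ‖A bp‖ ≤ 1 := by
    have := hABle bp; rwa [hbp] at this
  have hσ : ‖⟪bm, A bp⟫‖ ≤ c₂ * η := by
    rw [← hsA bm bp, hAbm, inner_sub_left, horth', sub_zero]
    calc ‖⟪r, bp⟫‖ ≤ ‖r‖ * ‖bp‖ := norm_inner_le_norm _ _
    _ ≤ c₂ * η := by rw [hbp, mul_one]; exact hr
  -- expansion of ⟪x, A (B x)⟫
  have hABxdec : A (B x) = α • ((‖B‖:ℂ) • A bp) + β • ((-(‖B‖:ℝ):ℂ) • A bm) + A (B y) := by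
    rw [hBxdec, map_add, map_add, map_smul, map_smul, map_smul, map_smul]
  have hinner : ⟪x, A (B x)⟫ =
      α * ((‖B‖:ℂ) * ⟪x, A bp⟫) + β * ((-(‖B‖:ℝ):ℂ) * ⟪x, A bm⟫) + ⟪x, A (B y)⟫ := by
    rw [hABxdec, inner_add_right, inner_add_right, inner_smul_right, inner_smul_right,
      inner_smul_right, inner_smul_right]
  have hxAbp : ⟪x, A bp⟫ =
      (starRingEnd ℂ) α * ⟪bp, A bp⟫ + (starRingEnd ℂ) β * ⟪bm, A bp⟫ + ⟪y, A bp⟫ := by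
    conv_lhs => rw [hxdec]
    rw [inner_add_left, inner_add_left, inner_smul_left, inner_smul_left]
  have hxbm : ⟪x, bm⟫ = (starRingEnd ℂ) β := by
    rw [hβ, inner_conj_symm]
  have hxAbm : ⟪x, A bm⟫ = ⟪x, r⟫ - (starRingEnd ℂ) β := by
    rw [hAbm, inner_sub_right, hxbm]
  -- lower bound for re ⟪x, A (B x)⟫
  have hxpre : (⟪x, p⟫).re ≤ X * θ := by
    have h1 : ‖⟪x, p⟫‖ ≤ X * θ := by
      rw [hXdef, hθdef]; exact norm_inner_le_norm _ _
    calc (⟪x, p⟫).re ≤ ‖⟪x, p⟫‖ := Complex.re_le_norm _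
    _ = ‖⟪x, p⟫‖ := rfl
    _ ≤ X * θ := h1
  have hxsub : ⟪x, A (B x)⟫ = ⟪x, x⟫ - ⟪x, p⟫ := by
    rw [hp, inner_sub_right]; ring
  have hrelow : X^2 - X * θ ≤ (⟪x, A (B x)⟫).re := by
    rw [hxsub, Complex.sub_re]
    have hxx : (⟪x, (x:E)⟫).re = X^2 := by
      rw [hXdef]; exact inner_self_eq_norm_sq (𝕜 := ℂ) x
    rw [hxx]
    linarith [hxpre]
  -- upper bound pieces
  have hT1 : (α * ((‖B‖:ℂ) * ⟪x, A bp⟫)).re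
      ≤ (1-ε) * a^2 + c₂ * η * (a*b) + a * ‖y‖ := by
    rw [hxAbp]
    have e1 : α * ((‖B‖:ℂ) * ((starRingEnd ℂ) α * ⟪bp, A bp⟫ +
        (starRingEnd ℂ) β * ⟪bm, A bp⟫ + ⟪y, A bp⟫))
        = (‖B‖:ℂ) * (α * (starRingEnd ℂ) α) * ⟪bp, A bp⟫
          + (‖B‖:ℂ) * (α * (starRingEnd ℂ) β) * ⟪bm, A bp⟫
          + (‖B‖:ℂ) * α * ⟪y, A bp⟫ := by ring
    rw [e1, Complex.add_re, Complex.add_re]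
    have p1 : ((‖B‖:ℂ) * (α * (starRingEnd ℂ) α) * ⟪bp, A bp⟫).re ≤ (1-ε) * a^2 := by
      rw [Complex.mul_conj, ← Complex.ofReal_mul, Complex.re_ofReal_mul]
      have hnsq : Complex.normSq α = a^2 := by
        rw [Complex.normSq_eq_norm_sq, ← ha]
      rw [hnsq]
      have hBτ : ‖B‖ * (⟪bp, A bp⟫).re ≤ 1-ε := by
        clear * - hApp hBpos hBle1 hε hε2
        nlinarith [mul_nonneg hBpos.le (sub_nonneg.2 hApp)]
      clear * - hBτ ha0
      nlinarith [sq_nonneg a]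
    have p2 : ((‖B‖:ℂ) * (α * (starRingEnd ℂ) β) * ⟪bm, A bp⟫).re ≤ c₂ * η * (a*b) := by
      calc ((‖B‖:ℂ) * (α * (starRingEnd ℂ) β) * ⟪bm, A bp⟫).re
          ≤ ‖(‖B‖:ℂ) * (α * (starRingEnd ℂ) β) * ⟪bm, A bp⟫‖ := by
            exact Complex.re_le_norm _
      _ = ‖B‖ * (a * b) * ‖⟪bm, A bp⟫‖ := by
            rw [norm_mul, norm_mul, norm_mul, hnB, RCLike.norm_conj, ← ha, ← hb]
      _ ≤ c₂ * η * (a*b) := by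
            have key : ‖B‖ * (a * b) * ‖(⟪bm, A bp⟫ : ℂ)‖ ≤ 1 * (a*b) * (c₂*η) :=
              mul_le_mul (mul_le_mul hBle1 le_rfl (mul_nonneg ha0 hb0) zero_le_one)
                hσ (norm_nonneg _) (by positivity)
            clear * - key
            nlinarith [key]
    have p3 : ((‖B‖:ℂ) * α * ⟪y, A bp⟫).re ≤ a * ‖y‖ := by
      calc ((‖B‖:ℂ) * α * ⟪y, A bp⟫).re ≤ ‖(‖B‖:ℂ) * α * ⟪y, A bp⟫‖ := by
            exact Complex.re_le_norm _
      _ = ‖B‖ * a * ‖⟪y, A bp⟫‖ := by rw [norm_mul, norm_mul, hnB, ← ha]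
      _ ≤ ‖B‖ * a * (‖y‖ * ‖A bp‖) := by
            have := norm_inner_le_norm (𝕜 := ℂ) y (A bp)
            have hn : 0 ≤ ‖B‖ * a := mul_nonneg hBpos.le ha0
            exact mul_le_mul_of_nonneg_left this hn
      _ ≤ a * ‖y‖ := by
            clear * - hBpos hBle1 ha0 hy0 hAbpn
            nlinarith [mul_nonneg ha0 hy0, mul_nonneg (mul_nonneg hBpos.le ha0) hy0]
    linarith
  have hT2 : (β * ((-(‖B‖:ℝ):ℂ) * ⟪x, A bm⟫)).re ≤ b^2 + c₂ * η * (b*X) := by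
    rw [hxAbm]
    have e2 : β * ((-(‖B‖:ℝ):ℂ) * (⟪x, r⟫ - (starRingEnd ℂ) β))
        = (‖B‖:ℂ) * (β * (starRingEnd ℂ) β) - (‖B‖:ℂ) * β * ⟪x, r⟫ := by
      push_cast; ring
    rw [e2, Complex.sub_re]
    have p1 : ((‖B‖:ℂ) * (β * (starRingEnd ℂ) β)).re ≤ b^2 := by
      rw [Complex.mul_conj, ← Complex.ofReal_mul, Complex.ofReal_re]
      have hnsq : Complex.normSq β = b^2 := by
        rw [Complex.normSq_eq_norm_sq, ← hb]
      rw [hnsq]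
      clear * - hBpos hBle1 hb0
      nlinarith [sq_nonneg b]
    have p2 : -(((‖B‖:ℂ) * β * ⟪x, r⟫).re) ≤ c₂ * η * (b*X) := by
      have h1 : ‖⟪x, (r:E)⟫‖ ≤ X * (c₂*η) := by
        calc ‖⟪x, (r:E)⟫‖ ≤ ‖x‖ * ‖r‖ := norm_inner_le_norm _ _
        _ ≤ X * (c₂*η) := by
              rw [← hXdef]
              exact mul_le_mul_of_nonneg_left hr (by rw [hXdef]; exact norm_nonneg x)
      calc -(((‖B‖:ℂ) * β * ⟪x, r⟫).re) ≤ ‖(‖B‖:ℂ) * β * ⟪x, r⟫‖ := by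
            calc -(((‖B‖:ℂ) * β * ⟪x, r⟫).re) ≤ |((‖B‖:ℂ) * β * ⟪x, r⟫).re| := neg_le_abs _
            _ ≤ ‖(‖B‖:ℂ) * β * ⟪x, r⟫‖ := Complex.abs_re_le_norm _
      _ ≤ c₂ * η * (b*X) := by
            rw [norm_mul, norm_mul, hnB, ← hb]
            have key : ‖B‖ * b * ‖⟪x, (r:E)⟫‖ ≤ 1 * b * (X * (c₂*η)) :=
              mul_le_mul (mul_le_mul hBle1 le_rfl hb0 zero_le_one)
                h1 (norm_nonneg _) (by positivity)
            clear * - key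
            nlinarith [key]
    linarith
  have hT3 : (⟪x, A (B y)⟫).re ≤ X * ‖y‖ := by
    calc (⟪x, A (B y)⟫).re ≤ ‖(⟪x, A (B y)⟫ : ℂ)‖ := by
          exact Complex.re_le_norm _
    _ ≤ ‖x‖ * ‖A (B y)‖ := norm_inner_le_norm _ _
    _ ≤ X * ‖y‖ := by
          rw [← hXdef]
          have h1 : ‖A (B y)‖ ≤ ‖y‖ := le_trans (hABle (B y)) hBy'
          exact mul_le_mul_of_nonneg_left h1 (by rw [hXdef]; exact norm_nonneg x)
  -- combine for the alpha bound
  have hsqle : ∀ t : ℝ, 0 ≤ t → t^2 ≤ X^2 → t ≤ X := fun t ht h2 =>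
    le_of_pow_le_pow_left₀ two_ne_zero hX0.le h2
  have haX : a ≤ X := hsqle a ha0 (by clear * - hX2; nlinarith [sq_nonneg b, sq_nonneg ‖y‖])
  have hbX : b ≤ X := hsqle b hb0 (by clear * - hX2; nlinarith [sq_nonneg a, sq_nonneg ‖y‖])
  have hyXle : ‖y‖ ≤ X := hsqle _ hy0 (by clear * - hX2; nlinarith [sq_nonneg a, sq_nonneg b])
  have hαq : ε * a^2 ≤ (1 + 2*c₂/c₁) * (θ*X) + 2 * (X * ‖y‖) := by
    have hcomb : X^2 - X * θ ≤ (1-ε)*a^2 + b^2 + 2*(c₂*η*X^2) + 2*(X*‖y‖) := by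
      have := hrelow
      rw [hinner, Complex.add_re, Complex.add_re] at this
      have m1 : c₂ * η * (a*b) ≤ c₂ * η * X^2 := by
        have hab : a*b ≤ X*X := mul_le_mul haX hbX hb0 hX0.le
        have := mul_le_mul_of_nonneg_left hab (by positivity : (0:ℝ) ≤ c₂*η)
        clear * - this
        nlinarith [this]
      have m2 : c₂ * η * (b*X) ≤ c₂ * η * X^2 := by
        have hab : b*X ≤ X*X := mul_le_mul_of_nonneg_right hbX hX0.le
        have := mul_le_mul_of_nonneg_left hab (by positivity : (0:ℝ) ≤ c₂*η)
        clear * - this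
        nlinarith [this]
      have m3 : a * ‖y‖ ≤ X * ‖y‖ := mul_le_mul_of_nonneg_right haX hy0
      linarith [hT1, hT2, hT3]
    have hc2η : c₂ * η * X^2 ≤ (c₂/c₁) * (θ*X) := by
      have h1 : (c₂/c₁) * ((c₁*η*X) * X) ≤ (c₂/c₁) * (θ * X) := by
        apply mul_le_mul_of_nonneg_left _ (by positivity)
        exact mul_le_mul_of_nonneg_right hc1ηθ hX0.le
      have h2 : (c₂/c₁) * ((c₁*η*X) * X) = c₂ * η * X^2 := by field_simp
      linarith
    have e : (1 + 2*c₂/c₁) * (θ*X) = θ * X + 2 * (c₂/c₁ * (θ * X)) := by ring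
    rw [e]
    clear * - hcomb hc2η hX2 hy0
    nlinarith [hX2, sq_nonneg ‖y‖, hy0]
  -- step (4): beta bound
  have hrbm : ⟪r, bm⟫ = 1 + ⟪bm, A bm⟫ := by
    rw [hrdef, inner_add_left, hbm2, hsA bm bm]
  have hconj : (starRingEnd ℂ) ⟪bm, A bm⟫ = ⟪bm, A bm⟫ := by
    rw [inner_conj_symm]
    exact hsA bm bm
  have hμreal : ((⟪bm, A bm⟫ : ℂ).re : ℂ) = ⟪bm, A bm⟫ := Complex.conj_eq_iff_re.mp hconj
  have hμabs : ‖(⟪bm, A bm⟫ : ℂ)‖ ≤ 1 := by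
    calc ‖(⟪bm, A bm⟫ : ℂ)‖ ≤ ‖bm‖ * ‖A bm‖ := norm_inner_le_norm _ _
    _ ≤ 1 := by
        have := hABle bm
        rw [hbm] at this ⊢
        simpa using this
  have hμlow : -1 ≤ (⟪bm, A bm⟫ : ℂ).re := by
    have h1 : |(⟪bm, A bm⟫ : ℂ).re| ≤ ‖(⟪bm, A bm⟫ : ℂ)‖ := by
      exact Complex.abs_re_le_norm _
    have := abs_le.1 (le_trans h1 hμabs)
    linarith [this.1]
  set w : ℝ := 1 - ‖B‖ + ‖B‖ * (1 + (⟪bm, A bm⟫ : ℂ).re) with hwdef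
  have hw : c₁ * η ≤ w := by
    have h1 : 0 ≤ ‖B‖ * (1 + (⟪bm, A bm⟫ : ℂ).re) :=
      mul_nonneg hBpos.le (by linarith)
    rw [hwdef]
    linarith
  have hbmp : ⟪bm, p⟫ = (w:ℂ) * β - (‖B‖:ℂ) * α * ⟪r, bp⟫ - ⟪r, B y⟫ := by
    have h1 : ⟪bm, p⟫ = β - ⟪bm, A (B x)⟫ := by
      rw [hp, inner_sub_right, ← hβ]
    have h2 : ⟪bm, A (B x)⟫ = ⟪A bm, B x⟫ := (hsA bm (B x)).symm
    have h3 : ⟪A bm, B x⟫ = ⟪r, B x⟫ - ⟪bm, B x⟫ := by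
      rw [hAbm, inner_sub_left]
    have h4 : ⟪bm, B x⟫ = -((‖B‖:ℂ)) * β := by
      rw [← hsB bm x, hBm, inner_smul_left, ← hβ]
      push_cast
      rw [map_neg, Complex.conj_ofReal]
    have h5 : ⟪r, B x⟫ = α * ((‖B‖:ℂ) * ⟪r, bp⟫) + β * ((-(‖B‖:ℝ):ℂ) * ⟪r, bm⟫)
        + ⟪r, B y⟫ := by
      rw [hBxdec, inner_add_right, inner_add_right, inner_smul_right, inner_smul_right,
        inner_smul_right, inner_smul_right]
    rw [h1, h2, h3, h4, h5, hrbm, ← hμreal, hwdef]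
    push_cast
    ring
  have hβq : c₁ * b ≤ c₃ * θ + c₂ * (a + ‖y‖) := by
    have h1 : w * b = ‖(w:ℂ) * β‖ := by
      rw [norm_mul, Complex.norm_real, Real.norm_eq_abs, ← hb,
        abs_of_nonneg (by linarith [hw, mul_pos hc₁ hη] : (0:ℝ) ≤ w)]
    have h2 : ‖(w:ℂ) * β‖ ≤ ‖⟪bm, p⟫‖ + ‖(‖B‖:ℂ) * α * ⟪r, bp⟫‖ + ‖⟪r, B y⟫‖ := by
      have e : (w:ℂ) * β = ⟪bm, p⟫ + (‖B‖:ℂ) * α * ⟪r, bp⟫ + ⟪r, B y⟫ := by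
        rw [hbmp]; ring
      rw [e]
      exact le_trans (norm_add_le _ _) (by linarith [norm_add_le (⟪bm, p⟫ + (‖B‖:ℂ) * α * ⟪r, bp⟫) (⟪r, B y⟫ : ℂ), norm_add_le (⟪bm, p⟫ : ℂ) ((‖B‖:ℂ) * α * ⟪r, bp⟫)])
    have h3 : ‖(‖B‖:ℂ) * α * ⟪r, bp⟫‖ ≤ c₂ * η * a := by
      rw [norm_mul, norm_mul, hnB, ← ha]
      have hrb : ‖⟪r, (bp:E)⟫‖ ≤ c₂ * η := by
        calc ‖⟪r, (bp:E)⟫‖ ≤ ‖r‖ * ‖bp‖ := norm_inner_le_norm _ _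
        _ ≤ c₂ * η := by rw [hbp, mul_one]; exact hr
      clear * - hrb hBpos hBle1 ha0 hc₂ hη
      nlinarith [norm_nonneg (⟪r, (bp:E)⟫ : ℂ), mul_nonneg ha0 (norm_nonneg (⟪r, (bp:E)⟫ : ℂ))]
    have h4 : ‖(⟪r, B y⟫ : ℂ)‖ ≤ c₂ * η * ‖y‖ := by
      calc ‖(⟪r, B y⟫ : ℂ)‖ ≤ ‖r‖ * ‖B y‖ := norm_inner_le_norm _ _
      _ ≤ c₂ * η * ‖y‖ := by
          clear * - hr hBy' hy0 hc₂ hη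
          nlinarith [norm_nonneg r, norm_nonneg (B y)]
    have h5 : ‖⟪bm, p⟫‖ ≤ c₃ * η * θ := hx
    have h6 : c₁ * η * b ≤ w * b := mul_le_mul_of_nonneg_right hw hb0
    have h7 : c₁ * η * b ≤ c₃ * η * θ + c₂ * η * a + c₂ * η * ‖y‖ := by
      linarith [h1, h2, h3, h4, h5, h6]
    have h8 : η * (c₁ * b) ≤ η * (c₃ * θ + c₂ * (a + ‖y‖)) := by ring_nf; ring_nf at h7; linarith
    exact le_of_mul_le_mul_left (by linarith [h8]) hη
  -- final contradiction
  have hyq1 : ‖y‖ ≤ s * X := by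
    apply le_of_pow_le_pow_left₀ two_ne_zero (by positivity : (0:ℝ) ≤ s * X)
    have h1 : ε * ‖y‖^2 ≤ ε * (s*X)^2 := by
      have hθδ : θ * X ≤ δ * X^2 := by
        have := mul_le_mul_of_nonneg_right hcase.le hX0.le
        clear * - this
        nlinarith [this]
      clear * - hyX hθδ hd3 hX0
      nlinarith [sq_nonneg X]
    clear * - h1 hε
    nlinarith
  have hyq2 : ‖y‖ ≤ Real.sqrt (2*δ/ε) * X := by
    have h1 : ‖y‖^2 ≤ (2*δ/ε) * X^2 := by
      have hθδ : θ * X ≤ δ * X^2 := by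
        have := mul_le_mul_of_nonneg_right hcase.le hX0.le
        clear * - this
        nlinarith [this]
      rw [div_mul_eq_mul_div, le_div_iff₀ hε]
      clear * - hyX hθδ
      nlinarith
    calc ‖y‖ = Real.sqrt (‖y‖^2) := (Real.sqrt_sq hy0).symm
    _ ≤ Real.sqrt ((2*δ/ε) * X^2) := Real.sqrt_le_sqrt h1
    _ = Real.sqrt (2*δ/ε) * X := by
        rw [Real.sqrt_mul (by positivity), Real.sqrt_sq hX0.le]
  have haq : a ≤ s * X := by
    apply le_of_pow_le_pow_left₀ two_ne_zero (by positivity : (0:ℝ) ≤ s * X)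
    have hθδ : θ * X ≤ δ * X^2 := by
      have := mul_le_mul_of_nonneg_right hcase.le hX0.le
      clear * - this
      nlinarith [this]
    have h1 : ε * a^2 ≤ ((1 + 2*c₂/c₁) * δ + 2 * Real.sqrt (2*δ/ε)) * X^2 := by
      have hK : 0 ≤ 1 + 2*c₂/c₁ := by positivity
      have h2 : (1 + 2*c₂/c₁) * (θ*X) ≤ (1 + 2*c₂/c₁) * (δ*X^2) :=
        mul_le_mul_of_nonneg_left hθδ hK
      have h3 : X * ‖y‖ ≤ Real.sqrt (2*δ/ε) * X^2 := by
        have := mul_le_mul_of_nonneg_left hyq2 hX0.le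
        clear * - this hX0
        nlinarith
      have e : ((1 + 2*c₂/c₁) * δ + 2 * Real.sqrt (2*δ/ε)) * X^2
          = (1 + 2*c₂/c₁) * (δ*X^2) + 2 * (Real.sqrt (2*δ/ε) * X^2) := by ring
      rw [e]
      clear * - hαq h2 h3
      linarith [hαq, h2, h3]
    have h4 : ((1 + 2*c₂/c₁) * δ + 2 * Real.sqrt (2*δ/ε)) * X^2 ≤ ε * s^2 * X^2 :=
      mul_le_mul_of_nonneg_right hd2 (sq_nonneg X)
    clear * - h1 h4 hε
    nlinarith
  have hbq : b ≤ X / 2 := by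
    have h1 : c₁ * b ≤ c₃ * (δ * X) + c₂ * (s*X + s*X) := by
      have hθδ : θ ≤ δ * X := hcase.le
      clear * - hβq hθδ haq hyq1 hc₃ hc₂
      nlinarith
    clear * - h1 hd4 hs5 hc₁ hX0
    nlinarith
  clear * - hX2 hyq1 haq hbq hs3 hs0 hX0 ha0 hb0 hy0
  have hss : s * s ≤ 1/9 := by nlinarith
  have h1 : a*a ≤ (s*X)*(s*X) := mul_self_le_mul_self ha0 haq
  have h2 : b*b ≤ (X/2)*(X/2) := mul_self_le_mul_self hb0 hbq
  have h3 : ‖y‖*‖y‖ ≤ (s*X)*(s*X) := mul_self_le_mul_self hy0 hyq1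
  have h4 : (s*X)*(s*X) ≤ (1/9)*(X*X) := by nlinarith [mul_pos hX0 hX0]
  nlinarith [mul_pos hX0 hX0]

/-- **Contraction-Inversion Lemma:** let `A`, `B` be Hermitian operators on
`ℂ^{2n}` with `‖A‖ ≤ 1` and `‖B‖ ≤ 1 − c₁η`, with normalized extremal
eigenvectors `b₊`, `b₋` of `B` and a spectral gap `ε` on their orthogonal
complement; if `⟨b₊, A b₊⟩ ≤ 1 − ε` and `‖(Id + A) b₋‖ ≤ c₂η`, then `Id − AB`
is invertible and `‖(Id − AB)⁻¹ p‖ ≤ C‖p‖` for every `p` with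
`|⟨b₋, p⟩| ≤ c₃η‖p‖`, where `C` depends only on `c₁, c₂, c₃, ε`. -/
theorem contraction_inversion_lemma
    (ε c₁ c₂ c₃ : ℝ) (hε : 0 < ε) (hc₁ : 0 < c₁) (hc₂ : 0 < c₂) (hc₃ : 0 < c₃) :
    ∃ C > (0:ℝ),
      ∀ (n : ℕ), 1 ≤ n →
      ∀ (η : ℝ), 0 < η → η ≤ ε * c₁ / (2 * c₂ ^ 2) →
      ∀ (A B : EuclideanSpace ℂ (Fin (2 * n)) →L[ℂ] EuclideanSpace ℂ (Fin (2 * n))),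
        IsSelfAdjoint A → IsSelfAdjoint B →
        ‖A‖ ≤ 1 → ‖B‖ ≤ 1 - c₁ * η →
      ∀ (bp bm : EuclideanSpace ℂ (Fin (2 * n))),
        ‖bp‖ = 1 → ‖bm‖ = 1 →
        B bp = (‖B‖ : ℂ) • bp →
        B bm = (-(‖B‖ : ℝ) : ℂ) • bm →
        (∀ x : EuclideanSpace ℂ (Fin (2 * n)),
          ⟪bp, x⟫ = 0 → ⟪bm, x⟫ = 0 → ‖B x‖ ≤ (1 - ε) * ‖x‖) →
        (⟪bp, A bp⟫.re ≤ 1 - ε) →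
        ‖(1 + A) bm‖ ≤ c₂ * η →
        IsUnit (1 - A * B) ∧
          ∀ p : EuclideanSpace ℂ (Fin (2 * n)),
            ‖⟪bm, p⟫‖ ≤ c₃ * η * ‖p‖ →
            ‖Ring.inverse (1 - A * B) p‖ ≤ C * ‖p‖ := by
  -- choice of constants
  set ε' : ℝ := min ε (1/2) with hε'def
  have hε'0 : 0 < ε' := lt_min hε (by norm_num)
  have hε'2 : ε' ≤ 1/2 := min_le_right _ _
  have hε'ε : ε' ≤ ε := min_le_left _ _
  set s : ℝ := min (1/3) (c₁/(8*c₂)) with hsdef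
  have hs0 : 0 < s := lt_min (by norm_num) (by positivity)
  have hs3 : s ≤ 1/3 := min_le_left _ _
  have hs5 : 2*c₂*s ≤ c₁/4 := by
    have h1 : s ≤ c₁/(8*c₂) := min_le_right _ _
    calc 2*c₂*s ≤ 2*c₂*(c₁/(8*c₂)) :=
          mul_le_mul_of_nonneg_left h1 (by positivity)
    _ = c₁/4 := by field_simp; ring
  set K : ℝ := 1 + 2*c₂/c₁ with hKdef
  have hK0 : 0 < K := by rw [hKdef]; positivity
  have hK1 : 1 ≤ K := by
    rw [hKdef]
    have : 0 < 2*c₂/c₁ := by positivity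
    linarith
  set δ : ℝ := min (min (ε'*s^2/(2*K)) (ε'^3*s^4/32)) (min (c₁/(4*c₃)) 1) with hδdef
  have hδ0 : 0 < δ := by
    apply lt_min (lt_min (by positivity) (by positivity)) (lt_min (by positivity) one_pos)
  have hδ1 : δ ≤ 1 := le_trans (min_le_right _ _) (min_le_right _ _)
  have hδa : δ ≤ ε'*s^2/(2*K) := le_trans (min_le_left _ _) (min_le_left _ _)
  have hδb : δ ≤ ε'^3*s^4/32 := le_trans (min_le_left _ _) (min_le_right _ _)
  have hδc : δ ≤ c₁/(4*c₃) := le_trans (min_le_right _ _) (min_le_left _ _)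
  have hd4 : c₃*δ ≤ c₁/4 := by
    calc c₃*δ ≤ c₃*(c₁/(4*c₃)) := mul_le_mul_of_nonneg_left hδc hc₃.le
    _ = c₁/4 := by field_simp
  have hKδ : K*δ ≤ ε'*s^2/2 := by
    calc K*δ ≤ K*(ε'*s^2/(2*K)) := mul_le_mul_of_nonneg_left hδa hK0.le
    _ = ε'*s^2/2 := by field_simp
  have hsqrt : Real.sqrt (2*δ/ε') ≤ ε'*s^2/4 := by
    have h1 : 2*δ/ε' ≤ (ε'*s^2/4)^2 := by
      rw [div_le_iff₀ hε'0]
      have h2 : (ε'*s^2/4)^2 * ε' = ε'^3*s^4/16 := by ring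
      rw [h2]
      linarith [hδb]
    calc Real.sqrt (2*δ/ε') ≤ Real.sqrt ((ε'*s^2/4)^2) := Real.sqrt_le_sqrt h1
    _ = ε'*s^2/4 := Real.sqrt_sq (by positivity)
  have hd2 : K*δ + 2*Real.sqrt (2*δ/ε') ≤ ε'*s^2 := by linarith
  have hd3 : 2*δ ≤ ε'*s^2 := by
    have h1 : 2*δ ≤ ε'*s^2/K := by
      rw [le_div_iff₀ hK0]
      calc 2*δ*K = 2*(K*δ) := by ring
      _ ≤ 2*(ε'*s^2/2) := by linarith
      _ = ε'*s^2 := by ring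
    have h2 : ε'*s^2/K ≤ ε'*s^2 := by
      rw [div_le_iff₀ hK0]
      nlinarith [mul_pos hε'0 (mul_pos hs0 hs0), sq_nonneg s]
    linarith
  refine ⟨1/δ, by positivity, ?_⟩
  intro n hn η hη hηε A B hA hB hAn hBn bp bm hbp hbm hBp hBm hgap hApp hAmm
  have hgap' : ∀ x : EuclideanSpace ℂ (Fin (2 * n)),
      ⟪bp, x⟫ = 0 → ⟪bm, x⟫ = 0 → ‖B x‖ ≤ (1 - ε') * ‖x‖ := fun x h1 h2 =>
    le_trans (hgap x h1 h2) (mul_le_mul_of_nonneg_right (by linarith) (norm_nonneg x))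
  have hApp' : ⟪bp, A bp⟫.re ≤ 1 - ε' := le_trans hApp (by linarith)
  have hABn : ‖A * B‖ < 1 := by
    have h1 : ‖A * B‖ ≤ ‖A‖ * ‖B‖ := norm_mul_le A B
    have h2 : ‖A‖ * ‖B‖ ≤ 1 * (1 - c₁*η) :=
      mul_le_mul hAn hBn (norm_nonneg B) one_pos.le
    have h3 : 0 < c₁ * η := mul_pos hc₁ hη
    calc ‖A * B‖ ≤ 1 * (1 - c₁*η) := le_trans h1 h2
    _ < 1 := by linarith
  have hUnit : IsUnit (1 - A * B) := ⟨Units.oneSub (A*B) hABn, rfl⟩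
  refine ⟨hUnit, fun p hp => ?_⟩
  set q := Ring.inverse (1 - A*B) p with hq
  have hinv : (1 - A*B) q = p := by
    have h1 : (1 - A*B) * Ring.inverse (1 - A*B) = 1 := Ring.mul_inverse_cancel _ hUnit
    calc (1 - A*B) q = ((1 - A*B) * Ring.inverse (1 - A*B)) p := rfl
    _ = p := by rw [h1]; rfl
  have hqe : q - A (B q) = p := by
    rw [← hinv]
    simp [ContinuousLinearMap.sub_apply, ContinuousLinearMap.mul_apply]
  have hx : ‖⟪bm, q - A (B q)⟫‖ ≤ c₃*η*‖q - A (B q)‖ := by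
    rw [hqe]
    exact hp
  have := key_estimate ε' c₁ c₂ c₃ η s δ hε'0 hε'2 hc₁ hc₂ hc₃ hη hs0 hs3 hs5 hδ0 hδ1
    hd2 hd3 hd4 A B hA hB hAn (by linarith [hBn]) bp bm hbp hbm hBp hBm hgap' hApp' hAmm q hx
  rw [hqe] at this
  exact this
end
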